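/- Let G be a connected weighted graph with cutset projection 𝒫, Laplacian L, incidence matrix B, weight matrix 𝒜, and natural frequencies ω ∈ 1ₙ^⊥. Fix γ ∈ [0, π/2) and p ∈ [1,∞], and let α_p(γ) > 0 be the minimum amplification factor. If ‖Bᵀ L† ω‖_p ≤ α_p(γ) γ, then there exists x* ∈ 1ₙ^⊥ with ‖Bᵀ x*‖_p ≤ γ (hence ‖Bᵀx*‖_∞ ≤ γ) solving the equilibrium equation ω = B𝒜 sin(Bᵀ x*). -/

import Mathlib

open Matrix ENNReal

/-- The unnormalized sinc function, `sinc t = sin t / t` with `sinc 0 = 1`. -/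
noncomputable def sinc (t : ℝ) : ℝ := if t = 0 then 1 else Real.sin t / t

/-- The `p`-norm of a real vector, for `p ∈ [1,∞]`. -/
noncomputable def pnorm {k : ℕ} (p : ENNReal) [Fact (1 ≤ p)] (v : Fin k → ℝ) : ℝ :=
  ‖(WithLp.equiv p (Fin k → ℝ)).symm v‖

lemma sinc_mul_self (t : ℝ) : sinc t * t = Real.sin t := by
  unfold sinc
  split_ifs with h
  · simp [h]
  · field_simp

lemma pnorm_nonneg {k : ℕ} (p : ENNReal) [Fact (1 ≤ p)] (v : Fin k → ℝ) : 0 ≤ pnorm p v :=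
  norm_nonneg _

lemma pnorm_zero {k : ℕ} (p : ENNReal) [Fact (1 ≤ p)] : pnorm p (0 : Fin k → ℝ) = 0 := by
  simp [pnorm]

lemma pnorm_eq_zero {k : ℕ} (p : ENNReal) [Fact (1 ≤ p)] {v : Fin k → ℝ} (h : pnorm p v = 0) :
    v = 0 := by
  have h1 := norm_eq_zero.mp h
  have h2 := congrArg (WithLp.equiv p (Fin k → ℝ)) h1
  simpa using h2

lemma pnorm_smul {k : ℕ} (p : ENNReal) [Fact (1 ≤ p)] (c : ℝ) (v : Fin k → ℝ) :
    pnorm p (c • v) = |c| * pnorm p v := by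
  unfold pnorm
  rw [WithLp.equiv_symm_apply, WithLp.toLp_smul, norm_smul, Real.norm_eq_abs]

lemma pnorm_continuous {k : ℕ} (p : ENNReal) [Fact (1 ≤ p)] :
    Continuous fun v : Fin k → ℝ => pnorm p v :=
  continuous_norm.comp (PiLp.continuousLinearEquiv p ℝ (fun _ : Fin k => ℝ)).symm.continuous

lemma abs_apply_le_pnorm {k : ℕ} (p : ENNReal) [Fact (1 ≤ p)] (v : Fin k → ℝ) (e : Fin k) :
    |v e| ≤ pnorm p v := by
  have hp1 : (1 : ENNReal) ≤ p := Fact.out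
  set f := (WithLp.equiv p (Fin k → ℝ)).symm v with hf
  have hfe : ‖f e‖ = |v e| := rfl
  rcases eq_or_ne p ∞ with hp | hp
  · subst hp
    rw [show pnorm ∞ v = ‖f‖ from rfl, PiLp.norm_eq_ciSup, ← hfe]
    exact le_ciSup (f := fun i => ‖f i‖) (Set.Finite.bddAbove (Set.finite_range _)) e
  · have ht : 0 < p.toReal := ENNReal.toReal_pos (by rintro rfl; simp at hp1) hp
    rw [show pnorm p v = ‖f‖ from rfl, PiLp.norm_eq_sum ht, ← hfe]
    have h2 : ‖f e‖ ^ p.toReal ≤ ∑ i, ‖f i‖ ^ p.toReal :=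
      Finset.single_le_sum (fun i _ => Real.rpow_nonneg (norm_nonneg _) _) (Finset.mem_univ e)
    calc ‖f e‖ = (‖f e‖ ^ p.toReal) ^ (1 / p.toReal) := by
          rw [one_div, Real.rpow_rpow_inv (norm_nonneg _) (ne_of_gt ht)]
      _ ≤ (∑ i, ‖f i‖ ^ p.toReal) ^ (1 / p.toReal) :=
          Real.rpow_le_rpow (Real.rpow_nonneg (norm_nonneg _) _) h2 (by positivity)

lemma quadform_zero {n m : ℕ} (B : Matrix (Fin n) (Fin m) ℝ) (d : Fin m → ℝ) (hd : ∀ e, 0 < d e)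
    (v : Fin n → ℝ) (h : (B * Matrix.diagonal d * Bᵀ).mulVec v = 0) : Bᵀ.mulVec v = 0 := by
  set u := Bᵀ.mulVec v with hu
  have key : v ⬝ᵥ (B * Matrix.diagonal d * Bᵀ).mulVec v = ∑ e, d e * (u e)^2 := by
    rw [← Matrix.mulVec_mulVec, ← Matrix.mulVec_mulVec, Matrix.dotProduct_mulVec,
      ← Matrix.mulVec_transpose]
    simp only [dotProduct, Matrix.mulVec_diagonal, ← hu]
    exact Finset.sum_congr rfl fun e _ => by ring
  have h0 : ∑ e, d e * (u e)^2 = 0 := by rw [← key, h]; simp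
  have hall : ∀ e ∈ Finset.univ, d e * (u e)^2 = 0 :=
    (Finset.sum_eq_zero_iff_of_nonneg
      (fun e _ => mul_nonneg (hd e).le (sq_nonneg _))).mp h0
  funext e
  have h1 := hall e (Finset.mem_univ e)
  have h2 : (u e)^2 = 0 := by
    rcases mul_eq_zero.mp h1 with h' | h'
    · exact absurd h' (ne_of_gt (hd e))
    · exact h'
  simpa [hu] using pow_eq_zero_iff (n := 2) (by norm_num) |>.mp h2

set_option maxHeartbeats 2000000 in
/-- **main sufficient condition for synchronization.** For a connected
weighted graph with incidence matrix `B`, weight matrix `𝒜`, Laplacian `L = B𝒜Bᵀ`,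
pseudoinverse `L†`, cutset projection `𝒫 = Bᵀ L† B𝒜`, frequencies `ω ⊥ 1ₙ`,
`γ ∈ [0, π/2)`, `p ∈ [1,∞]`, and minimum amplification factor
`α = α_p(γ) = inf { ‖𝒫 diag(sinc y) z‖_p : y, z ∈ Im(Bᵀ), ‖y‖_p ≤ γ, ‖z‖_p = 1 } > 0`:
if `‖Bᵀ L† ω‖_p ≤ α γ`, then there exists `x* ∈ 1ₙ^⊥` with `‖Bᵀ x*‖_p ≤ γ` (hence
`‖Bᵀ x*‖_∞ ≤ γ`) solving the equilibrium equation `ω = B𝒜 sin(Bᵀ x*)`. -/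
theorem sufficient_condition_for_synchronization
    (n m : ℕ) (B : Matrix (Fin n) (Fin m) ℝ) (a : Fin m → ℝ)
    (ha : ∀ e, 0 < a e)
    (hconn : ∀ x : Fin n → ℝ, Bᵀ.mulVec x = 0 ↔ ∃ c : ℝ, x = fun _ => c)
    (L Ldag : Matrix (Fin n) (Fin n) ℝ)
    (hL : L = B * Matrix.diagonal a * Bᵀ)
    (hmp1 : L * Ldag * L = L) (hmp2 : Ldag * L * Ldag = Ldag)
    (hmp3 : (L * Ldag)ᵀ = L * Ldag) (hmp4 : (Ldag * L)ᵀ = Ldag * L)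
    (P : Matrix (Fin m) (Fin m) ℝ)
    (hP : P = Bᵀ * Ldag * B * Matrix.diagonal a)
    (ω : Fin n → ℝ) (hω : ∑ i, ω i = 0)
    (γ : ℝ) (hγ : 0 ≤ γ ∧ γ < Real.pi / 2)
    (p : ENNReal) [Fact (1 ≤ p)]
    (α : ℝ) (hαpos : 0 < α)
    (hα : α = sInf {r : ℝ | ∃ y z : Fin m → ℝ,
      (∃ ξ : Fin n → ℝ, y = Bᵀ.mulVec ξ) ∧ pnorm p y ≤ γ ∧
      (∃ ξ : Fin n → ℝ, z = Bᵀ.mulVec ξ) ∧ pnorm p z = 1 ∧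
      r = pnorm p (P.mulVec (fun e => sinc (y e) * z e))})
    (hcond : pnorm p ((Bᵀ * Ldag).mulVec ω) ≤ α * γ) :
    ∃ xstar : Fin n → ℝ, (∑ i, xstar i = 0) ∧
      pnorm p (Bᵀ.mulVec xstar) ≤ γ ∧
      (∀ e, |Bᵀ.mulVec xstar e| ≤ γ) ∧
      ω = (B * Matrix.diagonal a).mulVec (fun e => Real.sin (Bᵀ.mulVec xstar e)) := by
  obtain ⟨hγ0, hγπ⟩ := hγ
  -- trivial case n = 0
  rcases Nat.eq_zero_or_pos n with hn0 | hn
  · subst hn0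
    refine ⟨0, by simp, ?_, ?_, ?_⟩
    · rw [Matrix.mulVec_zero, pnorm_zero]; exact hγ0
    · intro e; rw [Matrix.mulVec_zero]; simpa using hγ0
    · funext i; exact i.elim0
  have hn' : (n : ℝ) ≠ 0 := Nat.cast_ne_zero.mpr hn.ne'
  -- basic sum facts
  have hBone : ∀ e, ∑ i, B i e = 0 := by
    have h := (hconn fun _ => 1).mpr ⟨1, rfl⟩
    intro e
    have h2 := congrFun h e
    simpa [Matrix.mulVec, dotProduct] using h2
  have hsumB : ∀ w : Fin m → ℝ, ∑ i, B.mulVec w i = 0 := by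
    intro w
    simp only [Matrix.mulVec, dotProduct]
    rw [Finset.sum_comm]
    refine Finset.sum_eq_zero fun e _ => ?_
    rw [← Finset.sum_mul, hBone, zero_mul]
  have hsumBA : ∀ w : Fin m → ℝ, ∑ i, (B * Matrix.diagonal a).mulVec w i = 0 := by
    intro w; rw [← Matrix.mulVec_mulVec]; exact hsumB _
  -- case γ = 0 : then ω = 0
  rcases eq_or_lt_of_le hγ0 with hγeq | hγpos
  · have hγz : γ = 0 := hγeq.symm
    subst hγz
    have h1 : pnorm p ((Bᵀ * Ldag).mulVec ω) = 0 :=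
      le_antisymm (by simpa using hcond) (pnorm_nonneg _ _)
    have h2 : (Bᵀ * Ldag).mulVec ω = 0 := pnorm_eq_zero p h1
    have hLsymm : Lᵀ = L := by
      rw [hL]
      rw [Matrix.transpose_mul, Matrix.transpose_mul, Matrix.transpose_transpose,
        Matrix.diagonal_transpose, Matrix.mul_assoc]
    have hLQ : L * (L * Ldag) = L := by
      calc L * (L * Ldag) = ((L * (L * Ldag))ᵀ)ᵀ := by rw [Matrix.transpose_transpose]
        _ = ((L * Ldag)ᵀ * Lᵀ)ᵀ := by rw [Matrix.transpose_mul]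
        _ = (L * Ldag * L)ᵀ := by rw [hmp3, hLsymm]
        _ = Lᵀ := by rw [hmp1]
        _ = L := hLsymm
    set u := ω - (L * Ldag).mulVec ω with hu
    have hLu : L.mulVec u = 0 := by
      rw [hu, Matrix.mulVec_sub, Matrix.mulVec_mulVec, hLQ, sub_self]
    have hBtu : Bᵀ.mulVec u = 0 := quadform_zero B a ha u (by rw [← hL]; exact hLu)
    obtain ⟨c, hc⟩ := (hconn u).mp hBtu
    have hsumQ : ∑ i, (L * Ldag).mulVec ω i = 0 := by
      have hfact : L * Ldag = (B * Matrix.diagonal a) * (Bᵀ * Ldag) := by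
        rw [hL, Matrix.mul_assoc, Matrix.mul_assoc]
      rw [hfact, ← Matrix.mulVec_mulVec]
      exact hsumBA _
    have hsumu : ∑ i, u i = 0 := by
      rw [hu]
      simp only [Pi.sub_apply, Finset.sum_sub_distrib, hω, hsumQ, sub_zero]
    have hc0 : c = 0 := by
      rw [hc] at hsumu
      simp only [Finset.sum_const, Finset.card_univ, Fintype.card_fin, nsmul_eq_mul] at hsumu
      rcases mul_eq_zero.mp hsumu with h' | h'
      · exact absurd h' hn'
      · exact h'
    have hu0 : u = 0 := by rw [hc, hc0]; funext i; rfl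
    have hω0 : ω = 0 := by
      have hωQ : ω = (L * Ldag).mulVec ω := by
        have := sub_eq_zero.mp (hu ▸ hu0)
        exact this
      rw [hωQ, hL]
      rw [show B * Matrix.diagonal a * Bᵀ * Ldag = (B * Matrix.diagonal a) * (Bᵀ * Ldag) from
        by rw [Matrix.mul_assoc], ← Matrix.mulVec_mulVec, h2, Matrix.mulVec_zero]
    refine ⟨0, by simp, ?_, ?_, ?_⟩
    · rw [Matrix.mulVec_zero, pnorm_zero]
    · intro e; rw [Matrix.mulVec_zero]; simp
    · rw [hω0]
      have hz : (fun e : Fin m => Real.sin ((Bᵀ.mulVec (0 : Fin n → ℝ)) e)) = 0 := by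
        funext e; simp [Matrix.mulVec_zero]
      rw [hz, Matrix.mulVec_zero]
  -- main case: γ > 0
  classical
  set Ssum : (Fin n → ℝ) →ₗ[ℝ] ℝ :=
    { toFun := fun x => ∑ i, x i
      map_add' := fun x y => by simp [Finset.sum_add_distrib]
      map_smul' := fun c x => by simp [Finset.mul_sum] } with hSsum
  set CB := LinearMap.toContinuousLinearMap (Matrix.mulVecLin Bᵀ) with hCB
  set CA := LinearMap.toContinuousLinearMap (Matrix.mulVecLin (B * Matrix.diagonal a)) with hCA
  set CS := LinearMap.toContinuousLinearMap Ssum with hCS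
  have hCBapp : ∀ x, CB x = Bᵀ.mulVec x := fun x => rfl
  have hCAapp : ∀ w, CA w = (B * Matrix.diagonal a).mulVec w := fun w => rfl
  have hcontBt : Continuous fun x : Fin n → ℝ => Bᵀ.mulVec x := CB.continuous
  set g₀ : (Fin n → ℝ) → (Fin n → ℝ) :=
    fun x => (B * Matrix.diagonal a).mulVec (fun e => Real.sin (Bᵀ.mulVec x e)) with hg₀
  have hg₀cont : Continuous g₀ :=
    CA.continuous.comp (continuous_pi fun e =>
      Real.continuous_sin.comp ((continuous_apply e).comp hcontBt))
  -- amplification bound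
  have hD : ∀ (s : ℝ) (x : Fin n → ℝ), 0 ≤ s → pnorm p (Bᵀ.mulVec x) ≤ γ →
      s • ω = g₀ x → pnorm p (Bᵀ.mulVec x) ≤ s * γ := by
    intro s x hs hle heq
    set y := Bᵀ.mulVec x with hy
    by_cases hy0 : y = 0
    · rw [hy0, pnorm_zero]; positivity
    · have ht : 0 < pnorm p y :=
        lt_of_le_of_ne (pnorm_nonneg _ _) fun h => hy0 (pnorm_eq_zero p h.symm)
      set t := pnorm p y with htdef
      have hz1 : pnorm p (t⁻¹ • y) = 1 := by
        rw [pnorm_smul, abs_of_pos (inv_pos.mpr ht), inv_mul_cancel₀ (ne_of_gt ht)]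
      have hmem : pnorm p (P.mulVec (fun e => sinc (y e) * (t⁻¹ • y) e)) ∈
          {r : ℝ | ∃ y' z' : Fin m → ℝ,
            (∃ ξ : Fin n → ℝ, y' = Bᵀ.mulVec ξ) ∧ pnorm p y' ≤ γ ∧
            (∃ ξ : Fin n → ℝ, z' = Bᵀ.mulVec ξ) ∧ pnorm p z' = 1 ∧
            r = pnorm p (P.mulVec (fun e => sinc (y' e) * z' e))} :=
        ⟨y, t⁻¹ • y, ⟨x, hy⟩, hle,
          ⟨t⁻¹ • x, by rw [Matrix.mulVec_smul, ← hy]⟩, hz1, rfl⟩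
      have hbdd : BddBelow {r : ℝ | ∃ y' z' : Fin m → ℝ,
            (∃ ξ : Fin n → ℝ, y' = Bᵀ.mulVec ξ) ∧ pnorm p y' ≤ γ ∧
            (∃ ξ : Fin n → ℝ, z' = Bᵀ.mulVec ξ) ∧ pnorm p z' = 1 ∧
            r = pnorm p (P.mulVec (fun e => sinc (y' e) * z' e))} := by
        refine ⟨0, fun r hr => ?_⟩
        obtain ⟨y', z', _, _, _, _, hr'⟩ := hr
        rw [hr']; exact pnorm_nonneg _ _
      have hαler : α ≤ pnorm p (P.mulVec (fun e => sinc (y e) * (t⁻¹ • y) e)) := by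
        rw [hα]; exact csInf_le hbdd hmem
      have hfun : (fun e => sinc (y e) * (t⁻¹ • y) e) = t⁻¹ • (fun e => Real.sin (y e)) := by
        funext e
        simp only [Pi.smul_apply, smul_eq_mul]
        rw [← sinc_mul_self (y e)]; ring
      have hPval : P.mulVec (fun e => Real.sin (y e)) = s • ((Bᵀ * Ldag).mulVec ω) := by
        rw [hP, show Bᵀ * Ldag * B * Matrix.diagonal a
            = (Bᵀ * Ldag) * (B * Matrix.diagonal a) from by rw [Matrix.mul_assoc, Matrix.mul_assoc],
          ← Matrix.mulVec_mulVec]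
        rw [show (B * Matrix.diagonal a).mulVec (fun e => Real.sin (y e)) = s • ω from heq.symm]
        rw [Matrix.mulVec_smul]
      have hval : pnorm p (P.mulVec (fun e => sinc (y e) * (t⁻¹ • y) e))
          = t⁻¹ * (s * pnorm p ((Bᵀ * Ldag).mulVec ω)) := by
        rw [hfun, Matrix.mulVec_smul, hPval, pnorm_smul, pnorm_smul,
          abs_of_pos (inv_pos.mpr ht), abs_of_nonneg hs]
      rw [hval] at hαler
      have hX : pnorm p ((Bᵀ * Ldag).mulVec ω) ≤ α * γ := hcond
      have hXnn : 0 ≤ pnorm p ((Bᵀ * Ldag).mulVec ω) := pnorm_nonneg _ _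
      have h9 : α * t ≤ s * (α * γ) := by
        have h10 := mul_le_mul_of_nonneg_left hαler (le_of_lt ht)
        rw [← mul_assoc, mul_inv_cancel₀ (ne_of_gt ht), one_mul] at h10
        calc α * t = t * α := by ring
          _ ≤ s * pnorm p ((Bᵀ * Ldag).mulVec ω) := h10
          _ ≤ s * (α * γ) := mul_le_mul_of_nonneg_left hX hs
      have h11 : α * t ≤ α * (s * γ) := by
        rw [show α * (s * γ) = s * (α * γ) from by ring]; exact h9
      exact le_of_mul_le_mul_left h11 hαpos
  -- the compact set K
  set K : Set (Fin n → ℝ) := {x | (∑ i, x i) = 0 ∧ pnorm p (Bᵀ.mulVec x) ≤ γ} with hK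
  have hKclosed : IsClosed K := by
    refine IsClosed.inter ?_ ?_
    · exact isClosed_eq (by fun_prop) continuous_const
    · exact isClosed_le ((pnorm_continuous p).comp hcontBt) continuous_const
  have hKcompact : IsCompact K := by
    set T : (Fin n → ℝ) →ₗ[ℝ] (Fin m → ℝ) × ℝ := LinearMap.prod (Matrix.mulVecLin Bᵀ) Ssum with hT
    have hTinj : Function.Injective T := by
      rw [injective_iff_map_eq_zero]
      intro x hx
      have h1 : Bᵀ.mulVec x = 0 := congrArg Prod.fst hx
      have h2 : ∑ i, x i = 0 := congrArg Prod.snd hx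
      obtain ⟨c, hc⟩ := (hconn x).mp h1
      rw [hc] at h2
      simp only [Finset.sum_const, Finset.card_univ, Fintype.card_fin, nsmul_eq_mul] at h2
      have hc0 : c = 0 := by
        rcases mul_eq_zero.mp h2 with h' | h'
        · exact absurd h' hn'
        · exact h'
      rw [hc, hc0]; funext i; rfl
    set eT := (LinearEquiv.ofInjective T hTinj).toContinuousLinearEquiv with heT
    obtain ⟨K₀, hanti⟩ : ∃ K₀ : NNReal, AntilipschitzWith K₀ eT := ⟨_, eT.antilipschitz⟩
    have hbound : ∀ x ∈ K, ‖x‖ ≤ K₀ * γ := by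
      intro x hx
      have h1 := hanti.le_mul_dist x 0
      rw [dist_zero_right, map_zero, dist_zero_right] at h1
      have h2 : ‖eT x‖ = ‖T x‖ := by
        have e1 : eT x = LinearEquiv.ofInjective T hTinj x := rfl
        rw [e1, ← Submodule.norm_coe, LinearEquiv.ofInjective_apply]
      have h3 : ‖T x‖ ≤ γ := by
        have hTx : T x = (Bᵀ.mulVec x, ∑ i, x i) := rfl
        rw [hTx, Prod.norm_def]
        apply max_le
        · rw [pi_norm_le_iff_of_nonneg hγ0]
          intro e
          exact le_trans (abs_apply_le_pnorm p _ e) hx.2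
        · rw [hx.1]; simpa using hγ0
      calc ‖x‖ ≤ K₀ * ‖eT x‖ := h1
        _ = K₀ * ‖T x‖ := by rw [h2]
        _ ≤ K₀ * γ := by
            exact mul_le_mul_of_nonneg_left h3 (NNReal.coe_nonneg K₀)
    have hKbdd : Bornology.IsBounded K :=
      isBounded_iff_forall_norm_le.mpr ⟨K₀ * γ, hbound⟩
    exact Metric.isCompact_of_isClosed_isBounded hKclosed hKbdd
  -- the continuation set A
  set A : Set ℝ := {s | s ∈ Set.Icc (0:ℝ) 1 ∧ ∃ x ∈ K, s • ω = g₀ x} with hA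
  have h0A : (0:ℝ) ∈ A := by
    refine ⟨⟨le_refl 0, zero_le_one⟩, 0, ⟨by simp, ?_⟩, ?_⟩
    · rw [Matrix.mulVec_zero, pnorm_zero]; exact hγ0
    · rw [hg₀]
      simp only [Matrix.mulVec_zero, Pi.zero_apply, Real.sin_zero, zero_smul]
      rw [show (fun _ : Fin m => (0:ℝ)) = 0 from rfl, Matrix.mulVec_zero]
  have hC2closed : IsClosed {q : ℝ × (Fin n → ℝ) |
      q.1 ∈ Set.Icc (0:ℝ) 1 ∧ q.2 ∈ K ∧ q.1 • ω = g₀ q.2} := by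
    have heq2 : {q : ℝ × (Fin n → ℝ) | q.1 ∈ Set.Icc (0:ℝ) 1 ∧ q.2 ∈ K ∧ q.1 • ω = g₀ q.2}
        = (Prod.fst ⁻¹' Set.Icc (0:ℝ) 1) ∩ (Prod.snd ⁻¹' K)
          ∩ {q : ℝ × (Fin n → ℝ) | q.1 • ω = g₀ q.2} := by
      ext q; simp only [Set.mem_setOf_eq, Set.mem_inter_iff, Set.mem_preimage]; tauto
    rw [heq2]
    exact ((isClosed_Icc.preimage continuous_fst).inter (hKclosed.preimage continuous_snd)).inter
      (isClosed_eq (continuous_fst.smul continuous_const) (hg₀cont.comp continuous_snd))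
  have hC2cpt : IsCompact {q : ℝ × (Fin n → ℝ) |
      q.1 ∈ Set.Icc (0:ℝ) 1 ∧ q.2 ∈ K ∧ q.1 • ω = g₀ q.2} :=
    (isCompact_Icc.prod hKcompact).of_isClosed_subset hC2closed (fun q hq => ⟨hq.1, hq.2.1⟩)
  have hAeq : A = Prod.fst '' {q : ℝ × (Fin n → ℝ) |
      q.1 ∈ Set.Icc (0:ℝ) 1 ∧ q.2 ∈ K ∧ q.1 • ω = g₀ q.2} := by
    ext s
    constructor
    · rintro ⟨hsI, x, hxK, hx⟩
      exact ⟨(s, x), ⟨hsI, hxK, hx⟩, rfl⟩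
    · rintro ⟨⟨s', x⟩, ⟨hsI, hxK, hx⟩, rfl⟩
      exact ⟨hsI, x, hxK, hx⟩
  have hAcompact : IsCompact A := hAeq ▸ hC2cpt.image continuous_fst
  have hAbdd : BddAbove A := ⟨1, fun t ht => ht.1.2⟩
  have hσA : sSup A ∈ A := hAcompact.sSup_mem ⟨0, h0A⟩
  set σ := sSup A with hσdef
  obtain ⟨⟨hσ0, hσ1⟩, x₀, hx₀K, hx₀eq⟩ := hσA
  rcases eq_or_lt_of_le hσ1 with hσeq | hσlt
  · -- σ = 1 : done
    refine ⟨x₀, hx₀K.1, hx₀K.2, fun e => le_trans (abs_apply_le_pnorm p _ e) hx₀K.2, ?_⟩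
    have := hx₀eq
    rw [hσeq, one_smul] at this
    exact this
  · exfalso
    have hx₀γ : pnorm p (Bᵀ.mulVec x₀) ≤ σ * γ := hD σ x₀ hσ0 hx₀K.2 hx₀eq
    have hx₀lt : pnorm p (Bᵀ.mulVec x₀) < γ := lt_of_le_of_lt hx₀γ (mul_lt_of_lt_one_left hγpos hσlt)
    set y₀ := Bᵀ.mulVec x₀ with hy₀
    have hcos : ∀ e, 0 < Real.cos (y₀ e) := by
      intro e
      apply Real.cos_pos_of_mem_Ioo
      have h1 : |y₀ e| < Real.pi / 2 :=
        lt_of_lt_of_le (lt_of_le_of_lt (abs_apply_le_pnorm p y₀ e) hx₀lt) hγπ.le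
      obtain ⟨h2, h3⟩ := abs_lt.mp h1
      exact ⟨h2, h3⟩
    set dvec : Fin m → ℝ := fun e => a e * Real.cos (y₀ e) with hdvec
    set Mfull : Matrix (Fin n) (Fin n) ℝ :=
      B * Matrix.diagonal dvec * Bᵀ + Matrix.of (fun _ _ => (1:ℝ)) with hMfull
    have hones : ∀ v : Fin n → ℝ,
        (Matrix.of (fun _ _ => (1:ℝ)) : Matrix (Fin n) (Fin n) ℝ).mulVec v
          = fun _ => ∑ j, v j := by
      intro v; funext i; simp [Matrix.mulVec, dotProduct]
    have hinj : Function.Injective (Matrix.mulVecLin Mfull) := by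
      rw [injective_iff_map_eq_zero]
      intro v hv
      have hv' : (B * Matrix.diagonal dvec * Bᵀ).mulVec v + (fun _ => ∑ j, v j) = 0 := by
        have : Mfull.mulVec v = 0 := hv
        rwa [hMfull, Matrix.add_mulVec, hones] at this
      have hsplit : (B * Matrix.diagonal dvec * Bᵀ).mulVec v
          = B.mulVec ((Matrix.diagonal dvec).mulVec (Bᵀ.mulVec v)) := by
        rw [Matrix.mulVec_mulVec, Matrix.mulVec_mulVec]
      have hsum1 : ∑ i, (B * Matrix.diagonal dvec * Bᵀ).mulVec v i = 0 := by
        rw [hsplit]; exact hsumB _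
      have h9 : ∑ i, ((B * Matrix.diagonal dvec * Bᵀ).mulVec v i + ∑ j, v j) = 0 := by
        have h9' := congrArg (fun w : Fin n → ℝ => ∑ i, w i) hv'
        simpa using h9'
      rw [Finset.sum_add_distrib, hsum1, zero_add, Finset.sum_const, Finset.card_univ,
        Fintype.card_fin, nsmul_eq_mul] at h9
      have hsv : ∑ j, v j = 0 := by
        rcases mul_eq_zero.mp h9 with h' | h'
        · exact absurd h' hn'
        · exact h'
      have hLcv : (B * Matrix.diagonal dvec * Bᵀ).mulVec v = 0 := by
        funext i
        have h10 := congrFun hv' i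
        simp only [Pi.add_apply, Pi.zero_apply] at h10
        rw [hsv, add_zero] at h10
        exact h10
      have hBtv : Bᵀ.mulVec v = 0 :=
        quadform_zero B dvec (fun e => mul_pos (ha e) (hcos e)) v hLcv
      obtain ⟨c, hc⟩ := (hconn v).mp hBtv
      rw [hc] at hsv
      simp only [Finset.sum_const, Finset.card_univ, Fintype.card_fin, nsmul_eq_mul] at hsv
      have hc0 : c = 0 := by
        rcases mul_eq_zero.mp hsv with h' | h'
        · exact absurd h' hn'
        · exact h'
      rw [hc, hc0]; funext i; rfl
    have hsurj : Function.Surjective (Matrix.mulVecLin Mfull) :=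
      LinearMap.injective_iff_surjective.mp hinj
    set EJ := (LinearEquiv.ofBijective (Matrix.mulVecLin Mfull)
      ⟨hinj, hsurj⟩).toContinuousLinearEquiv with hEJ
    set w1 : Fin n → ℝ := fun _ => 1 with hw1
    set g : (Fin n → ℝ) → (Fin n → ℝ) := fun x => g₀ x + (∑ i, x i) • w1 with hg
    set CD := LinearMap.toContinuousLinearMap
      (Matrix.mulVecLin (Matrix.diagonal (fun e => Real.cos (y₀ e)))) with hCD
    have hsin : HasStrictFDerivAt (fun v : Fin m → ℝ => fun e => Real.sin (v e)) CD y₀ := by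
      apply hasStrictFDerivAt_pi''
      intro e
      have h1 := hasStrictFDerivAt_apply (𝕜 := ℝ) e y₀
      have h2 : HasStrictDerivAt Real.sin (Real.cos (y₀ e)) (y₀ e) := Real.hasStrictDerivAt_sin _
      have h3 := h2.comp_hasStrictFDerivAt y₀ h1
      convert h3 using 1
      · rfl
      · rfl
      refine ContinuousLinearMap.ext fun (v : Fin m → ℝ) => ?_
      show ((Matrix.diagonal fun e' => Real.cos (y₀ e')).mulVec v) e = _
      rw [Matrix.mulVec_diagonal]
      simp [mul_comm]
    have hchain : HasStrictFDerivAt g₀ (CA.comp (CD.comp CB)) x₀ := by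
      have h4 : HasStrictFDerivAt (fun x : Fin n → ℝ => (fun e => Real.sin ((Bᵀ.mulVec x) e)))
          (CD.comp CB) x₀ := hsin.comp x₀ CB.hasStrictFDerivAt
      exact (CA.hasStrictFDerivAt).comp x₀ h4
    have hsmulpart : HasStrictFDerivAt (fun x : Fin n → ℝ => (∑ i, x i) • w1)
        (CS.smulRight w1) x₀ := (CS.smulRight w1).hasStrictFDerivAt
    have hgderiv : HasStrictFDerivAt g (CA.comp (CD.comp CB) + CS.smulRight w1) x₀ :=
      hchain.add hsmulpart
    have hJeq : LinearMap.toContinuousLinearMap (Matrix.mulVecLin Mfull)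
        = CA.comp (CD.comp CB) + CS.smulRight w1 := by
      apply ContinuousLinearMap.ext
      intro v
      show Mfull.mulVec v
        = (B * Matrix.diagonal a).mulVec
            ((Matrix.diagonal (fun e => Real.cos (y₀ e))).mulVec (Bᵀ.mulVec v))
          + (∑ i, v i) • w1
      have hdd : Matrix.diagonal dvec
          = Matrix.diagonal a * Matrix.diagonal (fun e => Real.cos (y₀ e)) :=
        (Matrix.diagonal_mul_diagonal _ _).symm
      rw [Matrix.mulVec_mulVec, Matrix.mulVec_mulVec, hMfull, hdd, Matrix.add_mulVec, hones,
        ← Matrix.mul_assoc B]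
      congr 1
      funext i
      simp [hw1]
    have hstrict : HasStrictFDerivAt g (EJ : (Fin n → ℝ) →L[ℝ] (Fin n → ℝ)) x₀ := by
      have h8 : (EJ : (Fin n → ℝ) →L[ℝ] (Fin n → ℝ))
          = LinearMap.toContinuousLinearMap (Matrix.mulVecLin Mfull) := by
        apply ContinuousLinearMap.ext; intro v; rfl
      rw [h8, hJeq]
      exact hgderiv
    have hmap := hstrict.map_nhds_eq_of_equiv
    have hgx₀ : g x₀ = σ • ω := by
      show g₀ x₀ + (∑ i, x₀ i) • w1 = σ • ω
      rw [hx₀K.1, zero_smul, add_zero, hx₀eq]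
    set U : Set (Fin n → ℝ) := {x | pnorm p (Bᵀ.mulVec x) < γ} with hU
    have hUopen : IsOpen U := isOpen_lt ((pnorm_continuous p).comp hcontBt) continuous_const
    have hUnhds : U ∈ nhds x₀ := hUopen.mem_nhds hx₀lt
    have hSnh : g '' U ∈ nhds (σ • ω) := by
      rw [← hgx₀, ← hmap]
      exact Filter.image_mem_map hUnhds
    have hpre : (fun s : ℝ => s • ω) ⁻¹' (g '' U) ∈ nhds σ :=
      (continuous_id.smul continuous_const).continuousAt.preimage_mem_nhds hSnh
    obtain ⟨ε, hε, hball⟩ := Metric.mem_nhds_iff.mp hpre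
    set s1 := min 1 (σ + ε/2) with hs1
    have hs1σ : σ < s1 := lt_min hσlt (by linarith)
    have hs1mem : s1 ∈ Metric.ball σ ε := by
      rw [Metric.mem_ball, Real.dist_eq, abs_lt]
      constructor
      · linarith
      · have h11 := min_le_right 1 (σ + ε/2); linarith
    obtain ⟨x, hxU, hgx⟩ := hball hs1mem
    have hsumx : ∑ i, x i = 0 := by
      have h12 : ∑ i, g x i = (∑ i, g₀ x i) + (∑ i, x i) * n := by
        show ∑ i, (g₀ x + (∑ j, x j) • w1) i = _
        simp only [Pi.add_apply, Pi.smul_apply, hw1, smul_eq_mul, mul_one,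
          Finset.sum_add_distrib, Finset.sum_const, Finset.card_univ, Fintype.card_fin,
          nsmul_eq_mul]
        ring
      have h13 : ∑ i, g x i = 0 := by
        rw [hgx]
        simp only [Pi.smul_apply, smul_eq_mul, ← Finset.mul_sum, hω, mul_zero]
      rw [h13, hsumBA, zero_add] at h12
      rcases mul_eq_zero.mp h12.symm with h' | h'
      · exact h'
      · exact absurd h' hn'
    have hg₀x : s1 • ω = g₀ x := by
      have h14 : g x = g₀ x + (∑ i, x i) • w1 := rfl
      rw [hsumx, zero_smul, add_zero] at h14
      rw [← h14, hgx]
    have hs1A : s1 ∈ A :=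
      ⟨⟨le_min zero_le_one (by linarith), min_le_left _ _⟩, x, ⟨hsumx, le_of_lt hxU⟩, hg₀x⟩
    have h15 := le_csSup hAbdd hs1A
    rw [← hσdef] at h15
    exact absurd h15 (not_le.mpr hs1σ)
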